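/- Let R = (<₁, <₂, <₃) be a standard representation of a finite set V with |V| ≥ 4, with <ᵢ-maximum elements a₁, a₂, a₃, and let b be the <₁-maximum element of V \ {a₁}. Let R' = (<₁', <₂', <₃') be the triple of linear orders on V' = V \ {b} obtained by restricting each <ᵢ to V'. Then R' is a standard representation of V', and its <ᵢ'-maximum elements are again a₁, a₂, a₃. -/

import Mathlib

open SimpleGraph

variable {V : Type*}

/-- The graph Σ₂(R) for a triple of linear orders R = (l₁, l₂, l₃) on V:
`x` and `y` are adjacent iff every other vertex `z` lies above both `x` and `y`
in one of the three orders. -/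
def Sigma2 (l₁ l₂ l₃ : LinearOrder V) : SimpleGraph V where
  Adj x y := x ≠ y ∧ ∀ z, z ≠ x → z ≠ y →
    (l₁.lt x z ∧ l₁.lt y z) ∨ (l₂.lt x z ∧ l₂.lt y z) ∨ (l₃.lt x z ∧ l₃.lt y z)
  symm := ⟨by
    rintro x y ⟨hxy, h⟩
    exact ⟨hxy.symm, fun z hzy hzx => by rcases h z hzx hzy with h|h|h <;> tauto⟩⟩
  loopless := ⟨fun x h => h.1 rfl⟩

/-- The three orders have empty intersection: for distinct x, y, some order has x below y. -/
def IsRep (l₁ l₂ l₃ : LinearOrder V) : Prop :=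
  ∀ x y : V, x ≠ y → l₁.lt x y ∨ l₂.lt x y ∨ l₃.lt x y

/-- `a` is the maximum element of the linear order `l`. -/
def IsMaxOf (l : LinearOrder V) (a : V) : Prop := ∀ x, x ≠ a → l.lt x a

/-- `a` is among the two smallest elements of `l`: at most one element lies below `a`. -/
def AmongTwoSmallest (l : LinearOrder V) (a : V) : Prop :=
  ∀ x y, l.lt x a → l.lt y a → x = y

/-- `R = (l₁, l₂, l₃)` is a standard representation with `<ᵢ`-maxima `a₁, a₂, a₃`. -/
structure IsStdRep (l₁ l₂ l₃ : LinearOrder V) (a₁ a₂ a₃ : V) : Prop where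
  rep : IsRep l₁ l₂ l₃
  top₁ : IsMaxOf l₁ a₁
  top₂ : IsMaxOf l₂ a₂
  top₃ : IsMaxOf l₃ a₃
  a₁_small₂ : AmongTwoSmallest l₂ a₁
  a₁_small₃ : AmongTwoSmallest l₃ a₁
  a₂_small₁ : AmongTwoSmallest l₁ a₂
  a₂_small₃ : AmongTwoSmallest l₃ a₂
  a₃_small₁ : AmongTwoSmallest l₁ a₃
  a₃_small₂ : AmongTwoSmallest l₂ a₃

/-- The restriction of a linear order on `V` to `V \ {b}`. -/
def restrictOrder (l : LinearOrder V) (b : V) : LinearOrder {x : V // x ≠ b} :=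
  @LinearOrder.lift' _ _ l Subtype.val Subtype.val_injective

/-- Restricting the three orders of a standard representation to
V' = V \ {b}, where b is the <₁-maximum of V \ {a₁}, yields a standard representation
of V' whose maximum elements are again a₁, a₂, a₃. -/
theorem stmt8 {V : Type*} [Fintype V] (hV : 4 ≤ Fintype.card V)
    (l₁ l₂ l₃ : LinearOrder V) (a₁ a₂ a₃ : V)
    (hR : IsStdRep l₁ l₂ l₃ a₁ a₂ a₃)
    (b : V) (hba : b ≠ a₁) (hb : ∀ x, x ≠ a₁ → x ≠ b → l₁.lt x b) :
    ∃ a₁' a₂' a₃' : {x : V // x ≠ b},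
      a₁'.val = a₁ ∧ a₂'.val = a₂ ∧ a₃'.val = a₃ ∧
      IsStdRep (restrictOrder l₁ b) (restrictOrder l₂ b) (restrictOrder l₃ b)
        a₁' a₂' a₃' := by
  classical
  -- two elements distinct from a₁ and b
  have hcard : 2 ≤ (({a₁, b} : Finset V)ᶜ).card := by
    have h1 : ({a₁, b} : Finset V).card ≤ 2 := Finset.card_insert_le _ _ |>.trans (by simp)
    have := Finset.card_compl ({a₁, b} : Finset V)
    omega
  obtain ⟨x, hx, y, hy, hxy⟩ := Finset.one_lt_card.mp hcard
  simp only [Finset.mem_compl, Finset.mem_insert, Finset.mem_singleton, not_or] at hx hy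
  have hxb : l₁.lt x b := hb x hx.1 hx.2
  have hyb : l₁.lt y b := hb y hy.1 hy.2
  have ha₂b : a₂ ≠ b := fun h => hxy (hR.a₂_small₁ x y (h ▸ hxb) (h ▸ hyb))
  have ha₃b : a₃ ≠ b := fun h => hxy (hR.a₃_small₁ x y (h ▸ hxb) (h ▸ hyb))
  have hlt : ∀ (l : LinearOrder V) (u v : {x : V // x ≠ b}),
      (restrictOrder l b).lt u v ↔ l.lt u.val v.val := fun l u v => Iff.rfl
  refine ⟨⟨a₁, hba.symm⟩, ⟨a₂, ha₂b⟩, ⟨a₃, ha₃b⟩, rfl, rfl, rfl, ?_⟩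
  constructor
  · intro u v huv
    rcases hR.rep u.val v.val (fun h => huv (Subtype.ext h)) with h|h|h
    · exact Or.inl ((hlt l₁ u v).mpr h)
    · exact Or.inr (Or.inl ((hlt l₂ u v).mpr h))
    · exact Or.inr (Or.inr ((hlt l₃ u v).mpr h))
  · exact fun u hu => (hlt l₁ u _).mpr (hR.top₁ u.val (fun h => hu (Subtype.ext h)))
  · exact fun u hu => (hlt l₂ u _).mpr (hR.top₂ u.val (fun h => hu (Subtype.ext h)))
  · exact fun u hu => (hlt l₃ u _).mpr (hR.top₃ u.val (fun h => hu (Subtype.ext h)))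
  · exact fun u v hu hv => Subtype.ext (hR.a₁_small₂ u.val v.val ((hlt l₂ u _).mp hu) ((hlt l₂ v _).mp hv))
  · exact fun u v hu hv => Subtype.ext (hR.a₁_small₃ u.val v.val ((hlt l₃ u _).mp hu) ((hlt l₃ v _).mp hv))
  · exact fun u v hu hv => Subtype.ext (hR.a₂_small₁ u.val v.val ((hlt l₁ u _).mp hu) ((hlt l₁ v _).mp hv))
  · exact fun u v hu hv => Subtype.ext (hR.a₂_small₃ u.val v.val ((hlt l₃ u _).mp hu) ((hlt l₃ v _).mp hv))
  · exact fun u v hu hv => Subtype.ext (hR.a₃_small₁ u.val v.val ((hlt l₁ u _).mp hu) ((hlt l₁ v _).mp hv))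
  · exact fun u v hu hv => Subtype.ext (hR.a₃_small₂ u.val v.val ((hlt l₂ u _).mp hu) ((hlt l₂ v _).mp hv))
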